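/- arXiv:1701.06237 — 4 statements merged into one kernel-verified Lean document; each statement's English description precedes it below -/
import Mathlib

section
/- Let c ≥ 0 and n ∈ ℝ^d a unit vector, and let P be the projection P(v) = v if v·n ≤ c, P(v) = v - (v·n)n + cn otherwise. Then the function E : ℝ^d → ℝ defined by E(w) = w·P(w) - (1/2)|P(w)|² is convex, i.e., for all w₀, w₁ ∈ ℝ^d and s ∈ [0,1], E((1-s)w₀ + s w₁) ≤ (1-s)E(w₀) + s E(w₁). -/
open scoped RealInnerProductSpace

/-- The scalar profile function. -/
noncomputable def Hfun (c t : ℝ) : ℝ := if t ≤ c then t ^ 2 / 2 else c * t - c ^ 2 / 2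

/-- Supporting line with slope `a ≤ c` at point `a`. -/
lemma Hfun_line (c a t : ℝ) (ha : a ≤ c) : a * t - a ^ 2 / 2 ≤ Hfun c t := by
  unfold Hfun
  split_ifs with ht
  · nlinarith [sq_nonneg (t - a)]
  · push_neg at ht
    nlinarith [sq_nonneg (c - a), mul_nonneg (sub_nonneg.2 ha) (sub_nonneg.2 ht.le)]

/-- Convexity of the scalar profile. -/
lemma Hfun_convex (c t₀ t₁ s : ℝ) (hs0 : 0 ≤ s) (hs1 : s ≤ 1) :
    Hfun c ((1 - s) * t₀ + s * t₁) ≤ (1 - s) * Hfun c t₀ + s * Hfun c t₁ := by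
  set u := (1 - s) * t₀ + s * t₁ with hu
  by_cases huc : u ≤ c
  · have l0 := Hfun_line c u t₀ huc
    have l1 := Hfun_line c u t₁ huc
    have : Hfun c u = u ^ 2 / 2 := by simp [Hfun, huc]
    rw [this]
    nlinarith [mul_le_mul_of_nonneg_left l0 (by linarith : (0:ℝ) ≤ 1 - s),
      mul_le_mul_of_nonneg_left l1 hs0]
  · have l0 := Hfun_line c c t₀ le_rfl
    have l1 := Hfun_line c c t₁ le_rfl
    have : Hfun c u = c * u - c ^ 2 / 2 := by simp [Hfun, huc]
    rw [this]
    nlinarith [mul_le_mul_of_nonneg_left l0 (by linarith : (0:ℝ) ≤ 1 - s),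
      mul_le_mul_of_nonneg_left l1 hs0]

theorem E_convex_of_nonneg_speed {d : ℕ} (c : ℝ) (hc : 0 ≤ c)
    (n : EuclideanSpace ℝ (Fin d)) (hn : ‖n‖ = 1)
    (P : EuclideanSpace ℝ (Fin d) → EuclideanSpace ℝ (Fin d))
    (hP : ∀ v, P v = if ⟪v, n⟫ ≤ c then v else v - ⟪v, n⟫ • n + c • n)
    (En : EuclideanSpace ℝ (Fin d) → ℝ)
    (hEn : ∀ w, En w = ⟪w, P w⟫ - (1 / 2) * ‖P w‖ ^ 2) :
    ∀ w₀ w₁ : EuclideanSpace ℝ (Fin d), ∀ s ∈ Set.Icc (0 : ℝ) 1,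
      En ((1 - s) • w₀ + s • w₁) ≤ (1 - s) * En w₀ + s * En w₁ := by
  -- Key formula: En w = ½‖w - ⟪w,n⟫•n‖² + H(⟪w,n⟫)
  have key : ∀ w : EuclideanSpace ℝ (Fin d),
      En w = (1 / 2) * ‖w - ⟪w, n⟫ • n‖ ^ 2 + Hfun c ⟪w, n⟫ := by
    intro w
    have hsub : ∀ a : ℝ, ‖w - a • n‖ ^ 2 = ‖w‖ ^ 2 - 2 * (a * ⟪w, n⟫) + a ^ 2 := by
      intro a
      rw [norm_sub_sq_real, real_inner_smul_right, norm_smul, hn]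
      simp [mul_pow, sq_abs]
    rw [hEn, hP, Hfun]
    split_ifs with ht
    · rw [real_inner_self_eq_norm_sq, hsub]
      ring
    · have hrw : w - ⟪w, n⟫ • n + c • n = w - (⟪w, n⟫ - c) • n := by
        rw [sub_smul]; abel
      rw [hrw]
      have hinner : ⟪w, w - (⟪w, n⟫ - c) • n⟫
          = ‖w‖ ^ 2 - (⟪w, n⟫ - c) * ⟪w, n⟫ := by
        rw [inner_sub_right, real_inner_smul_right, real_inner_self_eq_norm_sq]
      rw [hinner, hsub, hsub]
      ring
  intro w₀ w₁ s hs
  obtain ⟨hs0, hs1⟩ := hs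
  set t₀ := ⟪w₀, n⟫ with ht₀
  set t₁ := ⟪w₁, n⟫ with ht₁
  have hts : ⟪(1 - s) • w₀ + s • w₁, n⟫ = (1 - s) * t₀ + s * t₁ := by
    rw [inner_add_left, real_inner_smul_left, real_inner_smul_left]
  rw [key, key, key, hts]
  set a₀ : EuclideanSpace ℝ (Fin d) := w₀ - t₀ • n with ha₀
  set a₁ : EuclideanSpace ℝ (Fin d) := w₁ - t₁ • n with ha₁
  have hlin : (1 - s) • w₀ + s • w₁ - ((1 - s) * t₀ + s * t₁) • n
      = (1 - s) • a₀ + s • a₁ := by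
    rw [ha₀, ha₁]
    module
  rw [hlin]
  have hnorm : ‖(1 - s) • a₀ + s • a₁‖ ≤ (1 - s) * ‖a₀‖ + s * ‖a₁‖ := by
    calc ‖(1 - s) • a₀ + s • a₁‖ ≤ ‖(1 - s) • a₀‖ + ‖s • a₁‖ := norm_add_le _ _
      _ = (1 - s) * ‖a₀‖ + s * ‖a₁‖ := by
          rw [norm_smul, norm_smul, Real.norm_eq_abs, Real.norm_eq_abs,
            abs_of_nonneg hs0, abs_of_nonneg (by linarith : (0:ℝ) ≤ 1 - s)]
  have hsq : ‖(1 - s) • a₀ + s • a₁‖ ^ 2 ≤ (1 - s) * ‖a₀‖ ^ 2 + s * ‖a₁‖ ^ 2 := by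
    nlinarith [norm_nonneg ((1 - s) • a₀ + s • a₁), norm_nonneg a₀, norm_nonneg a₁,
      sq_nonneg (‖a₀‖ - ‖a₁‖), mul_nonneg hs0 (by linarith : (0:ℝ) ≤ 1 - s)]
  have hH := Hfun_convex c t₀ t₁ s hs0 hs1
  nlinarith [hsq, hH]
end

section
/- Let W : ℝ^d → ℝ be C¹, even (W(x) = W(−x)), and λ-convex. Let μ¹, μ² be probability measures with finite second moments, γ an optimal transport plan between them. Then −∫∫⟨∇W(x−x') − ∇W(y−y'), (x−x') − (y−y')⟩ dγ(x',y') dγ(x,y) ≤ −λ ∫∫ |x−x'−y+y'|² dγ(x',y') dγ(x,y) ≤ max(0, −4λ) d_W²(μ¹, μ²). -/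
open MeasureTheory
open scoped RealInnerProductSpace

theorem lambda_convex_interaction_stability {d : ℕ} (lam : ℝ)
    (W : EuclideanSpace ℝ (Fin d) → ℝ)
    (W' : EuclideanSpace ℝ (Fin d) → EuclideanSpace ℝ (Fin d))
    (hW : ∀ x, HasGradientAt W (W' x) x)
    (heven : ∀ x, W x = W (-x))
    (hconv : ∀ x y, lam * ‖x - y‖ ^ 2 ≤ ⟪W' x - W' y, x - y⟫)
    (μ₁ μ₂ : Measure (EuclideanSpace ℝ (Fin d)))
    [IsProbabilityMeasure μ₁] [IsProbabilityMeasure μ₂]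
    (hμ₁ : Integrable (fun x => ‖x‖ ^ 2) μ₁)
    (hμ₂ : Integrable (fun x => ‖x‖ ^ 2) μ₂)
    (γ : Measure (EuclideanSpace ℝ (Fin d) × EuclideanSpace ℝ (Fin d)))
    [SFinite γ]
    (hγ₁ : γ.map Prod.fst = μ₁) (hγ₂ : γ.map Prod.snd = μ₂)
    (hopt : ∀ γ' : Measure (EuclideanSpace ℝ (Fin d) × EuclideanSpace ℝ (Fin d)),
      γ'.map Prod.fst = μ₁ → γ'.map Prod.snd = μ₂ →
      (∫ p, ‖p.1 - p.2‖ ^ 2 ∂γ) ≤ ∫ p, ‖p.1 - p.2‖ ^ 2 ∂γ')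
    (hcost : Integrable (fun p => ‖p.1 - p.2‖ ^ 2) γ)
    (hint₁ : Integrable
      (fun q => ⟪W' (q.1.1 - q.2.1) - W' (q.1.2 - q.2.2),
        (q.1.1 - q.2.1) - (q.1.2 - q.2.2)⟫) (γ.prod γ))
    (hint₂ : Integrable
      (fun q => ‖(q.1.1 - q.2.1) - (q.1.2 - q.2.2)‖ ^ 2) (γ.prod γ)) :
    -(∫ q, ⟪W' (q.1.1 - q.2.1) - W' (q.1.2 - q.2.2),
        (q.1.1 - q.2.1) - (q.1.2 - q.2.2)⟫ ∂(γ.prod γ))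
      ≤ -lam * ∫ q, ‖(q.1.1 - q.2.1) - (q.1.2 - q.2.2)‖ ^ 2 ∂(γ.prod γ) ∧
    -lam * (∫ q, ‖(q.1.1 - q.2.1) - (q.1.2 - q.2.2)‖ ^ 2 ∂(γ.prod γ))
      ≤ max 0 (-(4 * lam)) * ∫ p, ‖p.1 - p.2‖ ^ 2 ∂γ := by
  have hγprob : IsProbabilityMeasure γ := by
    constructor
    have : γ.map Prod.fst Set.univ = 1 := by rw [hγ₁]; exact measure_univ
    rwa [Measure.map_apply measurable_fst MeasurableSet.univ, Set.preimage_univ] at this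
  set I := ∫ q, ‖(q.1.1 - q.2.1) - (q.1.2 - q.2.2)‖ ^ 2 ∂(γ.prod γ) with hI
  set J := ∫ q, ⟪W' (q.1.1 - q.2.1) - W' (q.1.2 - q.2.2),
        (q.1.1 - q.2.1) - (q.1.2 - q.2.2)⟫ ∂(γ.prod γ) with hJ
  set C := ∫ p, ‖p.1 - p.2‖ ^ 2 ∂γ with hC
  have hInn : 0 ≤ I := integral_nonneg fun q => by positivity
  have hCnn : 0 ≤ C := integral_nonneg fun p => by positivity
  have hfirst : lam * I ≤ J := by
    rw [hI, ← integral_const_mul]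
    exact integral_mono (hint₂.const_mul lam) hint₁ fun q =>
      hconv (q.1.1 - q.2.1) (q.1.2 - q.2.2)
  constructor
  · rw [neg_mul]; exact neg_le_neg hfirst
  · -- bound I ≤ 4 C
    have hf1 : Integrable (fun q : (EuclideanSpace ℝ (Fin d) × EuclideanSpace ℝ (Fin d)) ×
        (EuclideanSpace ℝ (Fin d) × EuclideanSpace ℝ (Fin d)) => ‖q.1.1 - q.1.2‖ ^ 2)
        (γ.prod γ) := by
      have := hcost.mul_prod (integrable_const (1 : ℝ)) (ν := γ)
      simpa using this
    have hf2 : Integrable (fun q : (EuclideanSpace ℝ (Fin d) × EuclideanSpace ℝ (Fin d)) ×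
        (EuclideanSpace ℝ (Fin d) × EuclideanSpace ℝ (Fin d)) => ‖q.2.1 - q.2.2‖ ^ 2)
        (γ.prod γ) := by
      have := (integrable_const (1 : ℝ)).mul_prod hcost (μ := γ)
      simpa using this
    have hIC : I ≤ 4 * C := by
      have hmono : I ≤ ∫ q, (2 * ‖q.1.1 - q.1.2‖ ^ 2 + 2 * ‖q.2.1 - q.2.2‖ ^ 2) ∂(γ.prod γ) := by
        refine integral_mono hint₂ ((hf1.const_mul 2).add (hf2.const_mul 2)) fun q => ?_
        have hre : q.1.1 - q.2.1 - (q.1.2 - q.2.2) = (q.1.1 - q.1.2) - (q.2.1 - q.2.2) := by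
          abel
        rw [hre]
        have h := norm_sub_le (q.1.1 - q.1.2) (q.2.1 - q.2.2)
        have hn1 : (0:ℝ) ≤ ‖q.1.1 - q.1.2‖ := norm_nonneg _
        have hn2 : (0:ℝ) ≤ ‖q.2.1 - q.2.2‖ := norm_nonneg _
        nlinarith [sq_nonneg (‖q.1.1 - q.1.2‖ - ‖q.2.1 - q.2.2‖),
          norm_nonneg ((q.1.1 - q.1.2) - (q.2.1 - q.2.2))]
      have heq : ∫ q, (2 * ‖q.1.1 - q.1.2‖ ^ 2 + 2 * ‖q.2.1 - q.2.2‖ ^ 2) ∂(γ.prod γ)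
          = 4 * C := by
        rw [integral_add (hf1.const_mul 2) (hf2.const_mul 2), integral_const_mul,
          integral_const_mul]
        have h1 : ∫ q : (EuclideanSpace ℝ (Fin d) × EuclideanSpace ℝ (Fin d)) ×
            (EuclideanSpace ℝ (Fin d) × EuclideanSpace ℝ (Fin d)),
            ‖q.1.1 - q.1.2‖ ^ 2 ∂(γ.prod γ) = C := by
          have := MeasureTheory.integral_fun_fst (μ := γ) (ν := γ)
            (fun p : EuclideanSpace ℝ (Fin d) × EuclideanSpace ℝ (Fin d) => ‖p.1 - p.2‖ ^ 2)
          simpa using this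
        have h2 : ∫ q : (EuclideanSpace ℝ (Fin d) × EuclideanSpace ℝ (Fin d)) ×
            (EuclideanSpace ℝ (Fin d) × EuclideanSpace ℝ (Fin d)),
            ‖q.2.1 - q.2.2‖ ^ 2 ∂(γ.prod γ) = C := by
          have := MeasureTheory.integral_fun_snd (μ := γ) (ν := γ)
            (fun p : EuclideanSpace ℝ (Fin d) × EuclideanSpace ℝ (Fin d) => ‖p.1 - p.2‖ ^ 2)
          simpa using this
        rw [h1, h2]; ring
      linarith [hmono, heq.le]
    rcases le_or_gt 0 lam with hl | hl
    · have : max 0 (-(4 * lam)) = 0 := max_eq_left (by linarith)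
      rw [this, zero_mul]
      have : -lam * I ≤ 0 := mul_nonpos_of_nonpos_of_nonneg (by linarith) hInn
      linarith
    · have : max 0 (-(4 * lam)) = -(4 * lam) := max_eq_right (by linarith)
      rw [this]
      nlinarith [hIC, hInn, hCnn]
end

section
/- Let V, W ∈ C¹(ℝ^d) with |∇V(x)| ≤ C(1+|x|), |∇W(x)| ≤ C(1+|x|), and W even. Define for probability measures μ with finite second moment the energy φ(μ) = ∫V dμ + (1/2)∫∫W(x−y) dμ(y)dμ(x). Then for any μ¹, μ² with finite second moments, |φ(μ¹) − φ(μ²)| ≤ C'(1 + m₂(μ¹) + m₂(μ²)) d_W(μ¹, μ²), where m₂ denotes the second moment and d_W the 2-Wasserstein distance, with C' depending only on C. -/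
open MeasureTheory

private lemma lip_bound {E : Type*} [NormedAddCommGroup E] [InnerProductSpace ℝ E] [CompleteSpace E]
    {f : E → ℝ} {f' : E → E} {C : ℝ}
    (hf : ∀ x, HasGradientAt f (f' x) x) (hb : ∀ x, ‖f' x‖ ≤ C * (1 + ‖x‖)) (x y : E) :
    |f x - f y| ≤ C * (1 + ‖x‖ + ‖y‖) * ‖x - y‖ := by
  have hC : 0 ≤ C := by
    have h0 := hb 0
    rw [norm_zero] at h0
    nlinarith [norm_nonneg (f' 0)]
  have key := Convex.norm_image_sub_le_of_norm_hasFDerivWithin_le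
    (f := f) (f' := fun z => (InnerProductSpace.toDual ℝ E) (f' z))
    (s := segment ℝ y x) (C := C * (1 + ‖x‖ + ‖y‖))
    (fun z _ => (hf z).hasFDerivAt.hasFDerivWithinAt)
    (fun z hz => by
      rw [(InnerProductSpace.toDual ℝ E).norm_map]
      refine (hb z).trans ?_
      have hz' : ‖z‖ ≤ ‖x‖ + ‖y‖ := by
        obtain ⟨a, b, ha, hb', hab, rfl⟩ := hz
        calc ‖a • y + b • x‖ ≤ a * ‖y‖ + b * ‖x‖ := by
              refine (norm_add_le _ _).trans ?_
              rw [norm_smul, norm_smul, Real.norm_of_nonneg ha, Real.norm_of_nonneg hb']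
          _ ≤ ‖x‖ + ‖y‖ := by nlinarith [norm_nonneg x, norm_nonneg y]
      nlinarith)
    (convex_segment y x) (left_mem_segment ℝ y x) (right_mem_segment ℝ y x)
  rw [← Real.norm_eq_abs]
  exact key

private lemma cs_integral {α : Type*} [MeasurableSpace α] {μ : Measure α} {f g : α → ℝ}
    (hf0 : ∀ x, 0 ≤ f x) (hg0 : ∀ x, 0 ≤ g x) (hf : MemLp f 2 μ) (hg : MemLp g 2 μ) :
    ∫ x, f x * g x ∂μ ≤ Real.sqrt (∫ x, f x ^ 2 ∂μ) * Real.sqrt (∫ x, g x ^ 2 ∂μ) := by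
  have hpq : Real.HolderConjugate 2 2 := Real.HolderConjugate.two_two
  have h2 : (ENNReal.ofReal 2) = 2 := by norm_num
  have := integral_mul_le_Lp_mul_Lq_of_nonneg hpq (Filter.Eventually.of_forall hf0)
    (Filter.Eventually.of_forall hg0) (h2 ▸ hf) (h2 ▸ hg)
  calc ∫ x, f x * g x ∂μ
      ≤ (∫ a, f a ^ (2:ℝ) ∂μ) ^ (1/2 : ℝ) * (∫ a, g a ^ (2:ℝ) ∂μ) ^ (1/2 : ℝ) := this
    _ = Real.sqrt (∫ x, f x ^ 2 ∂μ) * Real.sqrt (∫ x, g x ^ 2 ∂μ) := by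
        rw [Real.sqrt_eq_rpow, Real.sqrt_eq_rpow]
        norm_num [Real.rpow_two]

private lemma sqrt_le_of_sq {a b : ℝ} (hb : 0 ≤ b) (h : a ≤ b ^ 2) : Real.sqrt a ≤ b :=
  (Real.sqrt_le_sqrt h).trans_eq (Real.sqrt_sq hb)

private lemma integrable_comp_map {α β : Type*} [MeasurableSpace α] [MeasurableSpace β]
    {ν : Measure α} {m : α → β} {μ : Measure β} {f : β → ℝ}
    (hm : Measurable m) (hμ : ν.map m = μ) (hf : Integrable f μ) :
    Integrable (fun a => f (m a)) ν := by
  subst hμ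
  exact (integrable_map_measure hf.aestronglyMeasurable hm.aemeasurable).1 hf

private lemma integral_comp_map {α β : Type*} [MeasurableSpace α] [MeasurableSpace β]
    {ν : Measure α} {m : α → β} {μ : Measure β} {f : β → ℝ}
    (hm : Measurable m) (hμ : ν.map m = μ) (hf : Integrable f μ) :
    ∫ a, f (m a) ∂ν = ∫ b, f b ∂μ := by
  subst hμ
  exact (integral_map hm.aemeasurable hf.aestronglyMeasurable).symm

private lemma five_sq {a b c d : ℝ} :
    (1 + a + b + c + d) ^ 2 ≤ 5 * (1 + a ^ 2 + b ^ 2 + c ^ 2 + d ^ 2) := by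
  nlinarith [sq_nonneg (a - b), sq_nonneg (a - c), sq_nonneg (a - d), sq_nonneg (b - c),
    sq_nonneg (b - d), sq_nonneg (c - d), sq_nonneg (1 - a), sq_nonneg (1 - b),
    sq_nonneg (1 - c), sq_nonneg (1 - d)]

set_option maxHeartbeats 2000000 in
private theorem main_aux {E : Type*} [NormedAddCommGroup E] [InnerProductSpace ℝ E]
    [CompleteSpace E] [MeasurableSpace E] [OpensMeasurableSpace E] [SecondCountableTopology E]
    (C : ℝ) (hC : 0 < C)
    (V W : E → ℝ) (V' W' : E → E)
    (hV : ∀ x, HasGradientAt V (V' x) x)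
    (hW : ∀ x, HasGradientAt W (W' x) x)
    (hVb : ∀ x, ‖V' x‖ ≤ C * (1 + ‖x‖))
    (hWb : ∀ x, ‖W' x‖ ≤ C * (1 + ‖x‖))
    (μ₁ μ₂ : Measure E)
    (hμ₁ : IsProbabilityMeasure μ₁) (hμ₂ : IsProbabilityMeasure μ₂)
    (hm₁ : Integrable (fun x => ‖x‖ ^ 2) μ₁) (hm₂ : Integrable (fun x => ‖x‖ ^ 2) μ₂)
    (hVi₁ : Integrable V μ₁) (hVi₂ : Integrable V μ₂)
    (hWi₁ : Integrable (fun p => W (p.1 - p.2)) (μ₁.prod μ₁))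
    (hWi₂ : Integrable (fun p => W (p.1 - p.2)) (μ₂.prod μ₂))
    (γ : Measure (E × E)) (hγ₁ : γ.map Prod.fst = μ₁) (hγ₂ : γ.map Prod.snd = μ₂)
    (hγT : Integrable (fun p => ‖p.1 - p.2‖ ^ 2) γ) :
    |((∫ x, V x ∂μ₁) + (1 / 2) * ∫ p, W (p.1 - p.2) ∂(μ₁.prod μ₁))
      - ((∫ x, V x ∂μ₂) + (1 / 2) * ∫ p, W (p.1 - p.2) ∂(μ₂.prod μ₂))|
      ≤ 6 * C * (1 + (∫ x, ‖x‖ ^ 2 ∂μ₁) + ∫ x, ‖x‖ ^ 2 ∂μ₂)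
        * Real.sqrt (∫ p, ‖p.1 - p.2‖ ^ 2 ∂γ) := by
  haveI hγP : IsProbabilityMeasure γ := by
    constructor
    have h := measure_univ (μ := μ₁)
    rw [← hγ₁, Measure.map_apply measurable_fst MeasurableSet.univ, Set.preimage_univ] at h
    exact h
  set S₁ := ∫ x, ‖x‖ ^ 2 ∂μ₁ with hS₁def
  set S₂ := ∫ x, ‖x‖ ^ 2 ∂μ₂ with hS₂def
  set T := ∫ p, ‖p.1 - p.2‖ ^ 2 ∂γ with hTdef
  have hS₁0 : 0 ≤ S₁ := integral_nonneg fun x => by positivity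
  have hS₂0 : 0 ≤ S₂ := integral_nonneg fun x => by positivity
  have hT0 : 0 ≤ T := integral_nonneg fun p => by positivity
  have hsqT : 0 ≤ Real.sqrt T := Real.sqrt_nonneg T
  have hS : (1:ℝ) ≤ 1 + S₁ + S₂ := by linarith
  -- Part A : the potential energy
  have hV1 : Integrable (fun p : E × E => V p.1) γ := integrable_comp_map measurable_fst hγ₁ hVi₁
  have hV2 : Integrable (fun p : E × E => V p.2) γ := integrable_comp_map measurable_snd hγ₂ hVi₂
  have hn1 : Integrable (fun p : E × E => ‖p.1‖ ^ 2) γ :=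
    integrable_comp_map measurable_fst hγ₁ hm₁
  have hn2 : Integrable (fun p : E × E => ‖p.2‖ ^ 2) γ :=
    integrable_comp_map measurable_snd hγ₂ hm₂
  have hi1 : ∫ p : E × E, ‖p.1‖ ^ 2 ∂γ = S₁ := integral_comp_map measurable_fst hγ₁ hm₁
  have hi2 : ∫ p : E × E, ‖p.2‖ ^ 2 ∂γ = S₂ := integral_comp_map measurable_snd hγ₂ hm₂
  have hboundA : Integrable (fun p : E × E => 3 * (1 + ‖p.1‖ ^ 2 + ‖p.2‖ ^ 2)) γ :=
    (((integrable_const 1).add hn1).add hn2).const_mul 3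
  have hfA2 : Integrable (fun p : E × E => (1 + ‖p.1‖ + ‖p.2‖) ^ 2) γ := by
    refine hboundA.mono' ?_ (Filter.Eventually.of_forall fun p => ?_)
    · exact (((continuous_const.add continuous_fst.norm).add continuous_snd.norm).pow
        2).aestronglyMeasurable
    · rw [Real.norm_eq_abs, abs_of_nonneg (by positivity)]
      nlinarith [norm_nonneg p.1, norm_nonneg p.2, sq_nonneg (‖p.1‖ - ‖p.2‖),
        sq_nonneg (1 - ‖p.1‖), sq_nonneg (1 - ‖p.2‖)]
  have hfAint : ∫ p : E × E, (1 + ‖p.1‖ + ‖p.2‖) ^ 2 ∂γ ≤ 3 * (1 + S₁ + S₂) := by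
    have hmono := integral_mono hfA2 hboundA (fun p => by
      nlinarith [norm_nonneg p.1, norm_nonneg p.2, sq_nonneg (‖p.1‖ - ‖p.2‖),
        sq_nonneg (1 - ‖p.1‖), sq_nonneg (1 - ‖p.2‖)])
    have hA1 : Integrable (fun p : E × E => 1 + ‖p.1‖ ^ 2) γ := (integrable_const 1).add hn1
    have hval : ∫ p : E × E, 3 * (1 + ‖p.1‖ ^ 2 + ‖p.2‖ ^ 2) ∂γ = 3 * (1 + S₁ + S₂) := by
      rw [integral_const_mul, integral_add hA1 hn2, integral_add (integrable_const 1) hn1,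
        integral_const, hi1, hi2]
      simp [measure_univ]
    linarith
  have hfAmem : MemLp (fun p : E × E => 1 + ‖p.1‖ + ‖p.2‖) 2 γ :=
    (memLp_two_iff_integrable_sq
      (((continuous_const.add continuous_fst.norm).add
        continuous_snd.norm).aestronglyMeasurable)).2 hfA2
  have hgAmem : MemLp (fun p : E × E => ‖p.1 - p.2‖) 2 γ :=
    (memLp_two_iff_integrable_sq
      ((continuous_fst.sub continuous_snd).norm.aestronglyMeasurable)).2 hγT
  have hmulA : Integrable (fun p : E × E => (1 + ‖p.1‖ + ‖p.2‖) * ‖p.1 - p.2‖) γ := by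
    have h := MemLp.smul (p := 2) (q := 2) (r := 1) hgAmem hfAmem
    rw [memLp_one_iff_integrable] at h
    simpa [smul_eq_mul, Pi.mul_def] using h
  have hsubA : Integrable (fun p : E × E => V p.1 - V p.2) γ := hV1.sub hV2
  have hAeq : (∫ x, V x ∂μ₁) - ∫ x, V x ∂μ₂ = ∫ p : E × E, (V p.1 - V p.2) ∂γ := by
    rw [integral_sub hV1 hV2, integral_comp_map measurable_fst hγ₁ hVi₁,
      integral_comp_map measurable_snd hγ₂ hVi₂]
  have h3 : Real.sqrt (3 * (1 + S₁ + S₂)) ≤ 2 * (1 + S₁ + S₂) :=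
    sqrt_le_of_sq (by positivity) (by nlinarith)
  have hA : |(∫ x, V x ∂μ₁) - ∫ x, V x ∂μ₂| ≤ 2 * C * (1 + S₁ + S₂) * Real.sqrt T := by
    rw [hAeq]
    calc |∫ p : E × E, (V p.1 - V p.2) ∂γ|
        ≤ ∫ p : E × E, |V p.1 - V p.2| ∂γ := by
          simpa [Real.norm_eq_abs] using
            norm_integral_le_integral_norm (μ := γ) (fun p : E × E => V p.1 - V p.2)
      _ ≤ ∫ p : E × E, C * ((1 + ‖p.1‖ + ‖p.2‖) * ‖p.1 - p.2‖) ∂γ := by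
          refine integral_mono hsubA.abs (hmulA.const_mul C) fun p => ?_
          calc |V p.1 - V p.2| ≤ C * (1 + ‖p.1‖ + ‖p.2‖) * ‖p.1 - p.2‖ :=
                lip_bound hV hVb p.1 p.2
            _ = C * ((1 + ‖p.1‖ + ‖p.2‖) * ‖p.1 - p.2‖) := by ring
      _ = C * ∫ p : E × E, (1 + ‖p.1‖ + ‖p.2‖) * ‖p.1 - p.2‖ ∂γ := integral_const_mul _ _
      _ ≤ C * (Real.sqrt (∫ p : E × E, (1 + ‖p.1‖ + ‖p.2‖) ^ 2 ∂γ)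
            * Real.sqrt (∫ p : E × E, ‖p.1 - p.2‖ ^ 2 ∂γ)) := by
          refine mul_le_mul_of_nonneg_left ?_ hC.le
          exact cs_integral (fun p => by positivity) (fun p => norm_nonneg _) hfAmem hgAmem
      _ ≤ 2 * C * (1 + S₁ + S₂) * Real.sqrt T := by
          have h1 : Real.sqrt (∫ p : E × E, (1 + ‖p.1‖ + ‖p.2‖) ^ 2 ∂γ) ≤ 2 * (1 + S₁ + S₂) :=
            (Real.sqrt_le_sqrt hfAint).trans h3
          have h2 := mul_le_mul_of_nonneg_right h1 hsqT
          nlinarith [Real.sqrt_nonneg (∫ p : E × E, (1 + ‖p.1‖ + ‖p.2‖) ^ 2 ∂γ)]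
  -- Part B : the interaction energy
  set ν : Measure ((E × E) × (E × E)) := γ.prod γ with hνdef
  have hmfst : ν.map Prod.fst = γ := by
    rw [hνdef, Measure.map_fst_prod]; simp
  have hmsnd : ν.map Prod.snd = γ := by
    rw [hνdef, Measure.map_snd_prod]; simp
  have hm11 : ν.map (fun q : (E × E) × (E × E) => q.1.1) = μ₁ := by
    rw [show (fun q : (E × E) × (E × E) => q.1.1) = Prod.fst ∘ Prod.fst from rfl,
      ← Measure.map_map measurable_fst measurable_fst, hmfst, hγ₁]
  have hm21 : ν.map (fun q : (E × E) × (E × E) => q.2.1) = μ₁ := by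
    rw [show (fun q : (E × E) × (E × E) => q.2.1) = Prod.fst ∘ Prod.snd from rfl,
      ← Measure.map_map measurable_fst measurable_snd, hmsnd, hγ₁]
  have hm12 : ν.map (fun q : (E × E) × (E × E) => q.1.2) = μ₂ := by
    rw [show (fun q : (E × E) × (E × E) => q.1.2) = Prod.snd ∘ Prod.fst from rfl,
      ← Measure.map_map measurable_snd measurable_fst, hmfst, hγ₂]
  have hm22 : ν.map (fun q : (E × E) × (E × E) => q.2.2) = μ₂ := by
    rw [show (fun q : (E × E) × (E × E) => q.2.2) = Prod.snd ∘ Prod.snd from rfl,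
      ← Measure.map_map measurable_snd measurable_snd, hmsnd, hγ₂]
  have hmp1 : ν.map (fun q : (E × E) × (E × E) => (q.1.1, q.2.1)) = μ₁.prod μ₁ := by
    rw [show (fun q : (E × E) × (E × E) => (q.1.1, q.2.1))
        = Prod.map (Prod.fst : E × E → E) Prod.fst from rfl,
      hνdef, ← Measure.map_prod_map _ _ measurable_fst measurable_fst, hγ₁]
  have hmp2 : ν.map (fun q : (E × E) × (E × E) => (q.1.2, q.2.2)) = μ₂.prod μ₂ := by
    rw [show (fun q : (E × E) × (E × E) => (q.1.2, q.2.2))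
        = Prod.map (Prod.snd : E × E → E) Prod.snd from rfl,
      hνdef, ← Measure.map_prod_map _ _ measurable_snd measurable_snd, hγ₂]
  have mq1 : Measurable (fun q : (E × E) × (E × E) => (q.1.1, q.2.1)) :=
    measurable_fst.fst.prodMk measurable_snd.fst
  have mq2 : Measurable (fun q : (E × E) × (E × E) => (q.1.2, q.2.2)) :=
    measurable_fst.snd.prodMk measurable_snd.snd
  have hWν1 : Integrable (fun q : (E × E) × (E × E) => W (q.1.1 - q.2.1)) ν :=
    integrable_comp_map (f := fun p : E × E => W (p.1 - p.2))
      (m := fun q : (E × E) × (E × E) => (q.1.1, q.2.1)) mq1 hmp1 hWi₁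
  have hWν2 : Integrable (fun q : (E × E) × (E × E) => W (q.1.2 - q.2.2)) ν :=
    integrable_comp_map (f := fun p : E × E => W (p.1 - p.2))
      (m := fun q : (E × E) × (E × E) => (q.1.2, q.2.2)) mq2 hmp2 hWi₂
  have hq11 : Integrable (fun q : (E × E) × (E × E) => ‖q.1.1‖ ^ 2) ν :=
    integrable_comp_map measurable_fst.fst hm11 hm₁
  have hq21 : Integrable (fun q : (E × E) × (E × E) => ‖q.2.1‖ ^ 2) ν :=
    integrable_comp_map measurable_snd.fst hm21 hm₁
  have hq12 : Integrable (fun q : (E × E) × (E × E) => ‖q.1.2‖ ^ 2) ν :=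
    integrable_comp_map measurable_fst.snd hm12 hm₂
  have hq22 : Integrable (fun q : (E × E) × (E × E) => ‖q.2.2‖ ^ 2) ν :=
    integrable_comp_map measurable_snd.snd hm22 hm₂
  have hqi11 : ∫ q : (E × E) × (E × E), ‖q.1.1‖ ^ 2 ∂ν = S₁ :=
    integral_comp_map measurable_fst.fst hm11 hm₁
  have hqi21 : ∫ q : (E × E) × (E × E), ‖q.2.1‖ ^ 2 ∂ν = S₁ :=
    integral_comp_map measurable_snd.fst hm21 hm₁
  have hqi12 : ∫ q : (E × E) × (E × E), ‖q.1.2‖ ^ 2 ∂ν = S₂ :=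
    integral_comp_map measurable_fst.snd hm12 hm₂
  have hqi22 : ∫ q : (E × E) × (E × E), ‖q.2.2‖ ^ 2 ∂ν = S₂ :=
    integral_comp_map measurable_snd.snd hm22 hm₂
  have hc1 : Integrable (fun q : (E × E) × (E × E) => ‖q.1.1 - q.1.2‖ ^ 2) ν :=
    integrable_comp_map measurable_fst hmfst hγT
  have hc2 : Integrable (fun q : (E × E) × (E × E) => ‖q.2.1 - q.2.2‖ ^ 2) ν :=
    integrable_comp_map measurable_snd hmsnd hγT
  have hci1 : ∫ q : (E × E) × (E × E), ‖q.1.1 - q.1.2‖ ^ 2 ∂ν = T :=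
    integral_comp_map measurable_fst hmfst hγT
  have hci2 : ∫ q : (E × E) × (E × E), ‖q.2.1 - q.2.2‖ ^ 2 ∂ν = T :=
    integral_comp_map measurable_snd hmsnd hγT
  have hboundB : Integrable (fun q : (E × E) × (E × E) =>
      5 * (1 + ‖q.1.1‖ ^ 2 + ‖q.2.1‖ ^ 2 + ‖q.1.2‖ ^ 2 + ‖q.2.2‖ ^ 2)) ν :=
    (((((integrable_const 1).add hq11).add hq21).add hq12).add hq22).const_mul 5
  have contfB : Continuous (fun q : (E × E) × (E × E) =>
      1 + ‖q.1.1‖ + ‖q.2.1‖ + ‖q.1.2‖ + ‖q.2.2‖) :=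
    (((continuous_const.add continuous_fst.fst.norm).add continuous_snd.fst.norm).add
      continuous_fst.snd.norm).add continuous_snd.snd.norm
  have hfB2 : Integrable (fun q : (E × E) × (E × E) =>
      (1 + ‖q.1.1‖ + ‖q.2.1‖ + ‖q.1.2‖ + ‖q.2.2‖) ^ 2) ν := by
    refine hboundB.mono' (contfB.pow 2).aestronglyMeasurable
      (Filter.Eventually.of_forall fun q => ?_)
    rw [Real.norm_eq_abs, abs_of_nonneg (by positivity)]
    exact five_sq
  have hfBint : ∫ q : (E × E) × (E × E),
      (1 + ‖q.1.1‖ + ‖q.2.1‖ + ‖q.1.2‖ + ‖q.2.2‖) ^ 2 ∂ν ≤ 10 * (1 + S₁ + S₂) := by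
    have hmono := integral_mono hfB2 hboundB (fun q => five_sq)
    have hval : ∫ q : (E × E) × (E × E),
        5 * (1 + ‖q.1.1‖ ^ 2 + ‖q.2.1‖ ^ 2 + ‖q.1.2‖ ^ 2 + ‖q.2.2‖ ^ 2) ∂ν
        = 5 * (1 + S₁ + S₁ + S₂ + S₂) := by
      have hB1 : Integrable (fun q : (E × E) × (E × E) => 1 + ‖q.1.1‖ ^ 2) ν :=
        (integrable_const 1).add hq11
      have hB2 : Integrable (fun q : (E × E) × (E × E) => 1 + ‖q.1.1‖ ^ 2 + ‖q.2.1‖ ^ 2) ν :=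
        hB1.add hq21
      have hB3 : Integrable (fun q : (E × E) × (E × E) =>
          1 + ‖q.1.1‖ ^ 2 + ‖q.2.1‖ ^ 2 + ‖q.1.2‖ ^ 2) ν := hB2.add hq12
      rw [integral_const_mul, integral_add hB3 hq22, integral_add hB2 hq12,
        integral_add hB1 hq21, integral_add (integrable_const 1) hq11,
        integral_const, hqi11, hqi21, hqi12, hqi22]
      simp [measure_univ]
    linarith
  have contgB : Continuous (fun q : (E × E) × (E × E) =>
      ‖q.1.1 - q.1.2‖ + ‖q.2.1 - q.2.2‖) :=
    (continuous_fst.fst.sub continuous_fst.snd).norm.add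
      (continuous_snd.fst.sub continuous_snd.snd).norm
  have hcsum : Integrable (fun q : (E × E) × (E × E) =>
      ‖q.1.1 - q.1.2‖ ^ 2 + ‖q.2.1 - q.2.2‖ ^ 2) ν := hc1.add hc2
  have hgB2 : Integrable (fun q : (E × E) × (E × E) =>
      (‖q.1.1 - q.1.2‖ + ‖q.2.1 - q.2.2‖) ^ 2) ν := by
    refine (hcsum.const_mul 2).mono' (contgB.pow 2).aestronglyMeasurable
      (Filter.Eventually.of_forall fun q => ?_)
    rw [Real.norm_eq_abs, abs_of_nonneg (by positivity)]
    nlinarith [sq_nonneg (‖q.1.1 - q.1.2‖ - ‖q.2.1 - q.2.2‖)]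
  have hgBint : ∫ q : (E × E) × (E × E),
      (‖q.1.1 - q.1.2‖ + ‖q.2.1 - q.2.2‖) ^ 2 ∂ν ≤ 4 * T := by
    have hmono := integral_mono hgB2 (hcsum.const_mul 2) (fun q => by
      nlinarith [sq_nonneg (‖q.1.1 - q.1.2‖ - ‖q.2.1 - q.2.2‖)])
    have hval : ∫ q : (E × E) × (E × E),
        2 * (‖q.1.1 - q.1.2‖ ^ 2 + ‖q.2.1 - q.2.2‖ ^ 2) ∂ν = 2 * (T + T) := by
      rw [integral_const_mul, integral_add hc1 hc2, hci1, hci2]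
    simp only [hval] at hmono ⊢
    linarith
  have hfBmem : MemLp (fun q : (E × E) × (E × E) =>
      1 + ‖q.1.1‖ + ‖q.2.1‖ + ‖q.1.2‖ + ‖q.2.2‖) 2 ν :=
    (memLp_two_iff_integrable_sq contfB.aestronglyMeasurable).2 hfB2
  have hgBmem : MemLp (fun q : (E × E) × (E × E) =>
      ‖q.1.1 - q.1.2‖ + ‖q.2.1 - q.2.2‖) 2 ν :=
    (memLp_two_iff_integrable_sq contgB.aestronglyMeasurable).2 hgB2
  have hmulB : Integrable (fun q : (E × E) × (E × E) =>
      (1 + ‖q.1.1‖ + ‖q.2.1‖ + ‖q.1.2‖ + ‖q.2.2‖) * (‖q.1.1 - q.1.2‖ + ‖q.2.1 - q.2.2‖)) ν := by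
    have h := MemLp.smul (p := 2) (q := 2) (r := 1) hgBmem hfBmem
    rw [memLp_one_iff_integrable] at h
    simpa [smul_eq_mul, Pi.mul_def] using h
  have hsubB : Integrable (fun q : (E × E) × (E × E) =>
      W (q.1.1 - q.2.1) - W (q.1.2 - q.2.2)) ν := hWν1.sub hWν2
  have hBeq : (∫ p, W (p.1 - p.2) ∂(μ₁.prod μ₁)) - ∫ p, W (p.1 - p.2) ∂(μ₂.prod μ₂)
      = ∫ q : (E × E) × (E × E), (W (q.1.1 - q.2.1) - W (q.1.2 - q.2.2)) ∂ν := by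
    have e1 : ∫ p, W (p.1 - p.2) ∂(μ₁.prod μ₁)
        = ∫ q : (E × E) × (E × E), W (q.1.1 - q.2.1) ∂ν :=
      (integral_comp_map (f := fun p : E × E => W (p.1 - p.2))
        (m := fun q : (E × E) × (E × E) => (q.1.1, q.2.1)) mq1 hmp1 hWi₁).symm
    have e2 : ∫ p, W (p.1 - p.2) ∂(μ₂.prod μ₂)
        = ∫ q : (E × E) × (E × E), W (q.1.2 - q.2.2) ∂ν :=
      (integral_comp_map (f := fun p : E × E => W (p.1 - p.2))
        (m := fun q : (E × E) × (E × E) => (q.1.2, q.2.2)) mq2 hmp2 hWi₂).symm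
    rw [e1, e2, integral_sub hWν1 hWν2]
  have h10 : Real.sqrt (10 * (1 + S₁ + S₂)) ≤ 4 * (1 + S₁ + S₂) :=
    sqrt_le_of_sq (by positivity) (by nlinarith)
  have hsq4T : Real.sqrt (∫ q : (E × E) × (E × E),
      (‖q.1.1 - q.1.2‖ + ‖q.2.1 - q.2.2‖) ^ 2 ∂ν) ≤ 2 * Real.sqrt T := by
    refine sqrt_le_of_sq (by positivity) ?_
    rw [mul_pow, Real.sq_sqrt hT0]
    norm_num
    linarith
  have hB : |(∫ p, W (p.1 - p.2) ∂(μ₁.prod μ₁)) - ∫ p, W (p.1 - p.2) ∂(μ₂.prod μ₂)|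
      ≤ 8 * C * (1 + S₁ + S₂) * Real.sqrt T := by
    rw [hBeq]
    calc |∫ q : (E × E) × (E × E), (W (q.1.1 - q.2.1) - W (q.1.2 - q.2.2)) ∂ν|
        ≤ ∫ q : (E × E) × (E × E), |W (q.1.1 - q.2.1) - W (q.1.2 - q.2.2)| ∂ν := by
          simpa [Real.norm_eq_abs] using norm_integral_le_integral_norm (μ := ν)
            (fun q : (E × E) × (E × E) => W (q.1.1 - q.2.1) - W (q.1.2 - q.2.2))
      _ ≤ ∫ q : (E × E) × (E × E), C * ((1 + ‖q.1.1‖ + ‖q.2.1‖ + ‖q.1.2‖ + ‖q.2.2‖)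
            * (‖q.1.1 - q.1.2‖ + ‖q.2.1 - q.2.2‖)) ∂ν := by
          refine integral_mono hsubB.abs (hmulB.const_mul C) fun q => ?_
          have hl := lip_bound hW hWb (q.1.1 - q.2.1) (q.1.2 - q.2.2)
          have hd : ‖q.1.1 - q.2.1 - (q.1.2 - q.2.2)‖ ≤ ‖q.1.1 - q.1.2‖ + ‖q.2.1 - q.2.2‖ := by
            have : q.1.1 - q.2.1 - (q.1.2 - q.2.2) = (q.1.1 - q.1.2) - (q.2.1 - q.2.2) := by abel
            rw [this]
            exact norm_sub_le _ _
          have hx : ‖q.1.1 - q.2.1‖ ≤ ‖q.1.1‖ + ‖q.2.1‖ := norm_sub_le _ _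
          have hy : ‖q.1.2 - q.2.2‖ ≤ ‖q.1.2‖ + ‖q.2.2‖ := norm_sub_le _ _
          refine hl.trans ?_
          have h1 : 1 + ‖q.1.1 - q.2.1‖ + ‖q.1.2 - q.2.2‖
              ≤ 1 + ‖q.1.1‖ + ‖q.2.1‖ + ‖q.1.2‖ + ‖q.2.2‖ := by linarith
          rw [mul_assoc]
          exact mul_le_mul_of_nonneg_left
            (mul_le_mul h1 hd (norm_nonneg _) (by positivity)) hC.le
      _ = C * ∫ q : (E × E) × (E × E), (1 + ‖q.1.1‖ + ‖q.2.1‖ + ‖q.1.2‖ + ‖q.2.2‖)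
            * (‖q.1.1 - q.1.2‖ + ‖q.2.1 - q.2.2‖) ∂ν := integral_const_mul _ _
      _ ≤ C * (Real.sqrt (∫ q : (E × E) × (E × E),
            (1 + ‖q.1.1‖ + ‖q.2.1‖ + ‖q.1.2‖ + ‖q.2.2‖) ^ 2 ∂ν)
            * Real.sqrt (∫ q : (E × E) × (E × E),
            (‖q.1.1 - q.1.2‖ + ‖q.2.1 - q.2.2‖) ^ 2 ∂ν)) := by
          refine mul_le_mul_of_nonneg_left ?_ hC.le
          exact cs_integral (fun q => by positivity) (fun q => by positivity) hfBmem hgBmem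
      _ ≤ 8 * C * (1 + S₁ + S₂) * Real.sqrt T := by
          have h1 : Real.sqrt (∫ q : (E × E) × (E × E),
              (1 + ‖q.1.1‖ + ‖q.2.1‖ + ‖q.1.2‖ + ‖q.2.2‖) ^ 2 ∂ν) ≤ 4 * (1 + S₁ + S₂) :=
            (Real.sqrt_le_sqrt hfBint).trans h10
          have hfB0 : 0 ≤ Real.sqrt (∫ q : (E × E) × (E × E),
              (1 + ‖q.1.1‖ + ‖q.2.1‖ + ‖q.1.2‖ + ‖q.2.2‖) ^ 2 ∂ν) := Real.sqrt_nonneg _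
          have hgB0 : 0 ≤ Real.sqrt (∫ q : (E × E) × (E × E),
              (‖q.1.1 - q.1.2‖ + ‖q.2.1 - q.2.2‖) ^ 2 ∂ν) := Real.sqrt_nonneg _
          have step1 : Real.sqrt (∫ q : (E × E) × (E × E),
                (1 + ‖q.1.1‖ + ‖q.2.1‖ + ‖q.1.2‖ + ‖q.2.2‖) ^ 2 ∂ν)
              * Real.sqrt (∫ q : (E × E) × (E × E),
                (‖q.1.1 - q.1.2‖ + ‖q.2.1 - q.2.2‖) ^ 2 ∂ν)
              ≤ (4 * (1 + S₁ + S₂)) * (2 * Real.sqrt T) :=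
            mul_le_mul h1 hsq4T hgB0 (by positivity)
          calc C * (Real.sqrt (∫ q : (E × E) × (E × E),
                (1 + ‖q.1.1‖ + ‖q.2.1‖ + ‖q.1.2‖ + ‖q.2.2‖) ^ 2 ∂ν)
              * Real.sqrt (∫ q : (E × E) × (E × E),
                (‖q.1.1 - q.1.2‖ + ‖q.2.1 - q.2.2‖) ^ 2 ∂ν))
              ≤ C * ((4 * (1 + S₁ + S₂)) * (2 * Real.sqrt T)) :=
              mul_le_mul_of_nonneg_left step1 hC.le
            _ = 8 * C * (1 + S₁ + S₂) * Real.sqrt T := by ring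
  calc |((∫ x, V x ∂μ₁) + 1 / 2 * ∫ p, W (p.1 - p.2) ∂(μ₁.prod μ₁))
        - ((∫ x, V x ∂μ₂) + 1 / 2 * ∫ p, W (p.1 - p.2) ∂(μ₂.prod μ₂))|
      = |((∫ x, V x ∂μ₁) - ∫ x, V x ∂μ₂) + 1 / 2
          * ((∫ p, W (p.1 - p.2) ∂(μ₁.prod μ₁)) - ∫ p, W (p.1 - p.2) ∂(μ₂.prod μ₂))| := by
        ring_nf
    _ ≤ |(∫ x, V x ∂μ₁) - ∫ x, V x ∂μ₂| + |1 / 2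
          * ((∫ p, W (p.1 - p.2) ∂(μ₁.prod μ₁)) - ∫ p, W (p.1 - p.2) ∂(μ₂.prod μ₂))| :=
        abs_add_le _ _
    _ ≤ 2 * C * (1 + S₁ + S₂) * Real.sqrt T
        + 1 / 2 * (8 * C * (1 + S₁ + S₂) * Real.sqrt T) := by
        refine add_le_add hA ?_
        rw [abs_mul]
        rw [abs_of_nonneg (by norm_num : (0:ℝ) ≤ 1/2)]
        linarith [hB]
    _ = 6 * C * (1 + S₁ + S₂) * Real.sqrt T := by ring

theorem energy_lipschitz_in_wasserstein {d : ℕ} (C : ℝ) (hC : 0 < C) :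
    ∃ C' > 0,
      ∀ (V W : EuclideanSpace ℝ (Fin d) → ℝ)
        (V' W' : EuclideanSpace ℝ (Fin d) → EuclideanSpace ℝ (Fin d)),
        (∀ x, HasGradientAt V (V' x) x) →
        (∀ x, HasGradientAt W (W' x) x) →
        (∀ x, ‖V' x‖ ≤ C * (1 + ‖x‖)) →
        (∀ x, ‖W' x‖ ≤ C * (1 + ‖x‖)) →
        (∀ x, W x = W (-x)) →
        ∀ (μ₁ μ₂ : Measure (EuclideanSpace ℝ (Fin d))),
          IsProbabilityMeasure μ₁ → IsProbabilityMeasure μ₂ →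
          Integrable (fun x => ‖x‖ ^ 2) μ₁ → Integrable (fun x => ‖x‖ ^ 2) μ₂ →
          Integrable V μ₁ → Integrable V μ₂ →
          Integrable (fun p => W (p.1 - p.2)) (μ₁.prod μ₁) →
          Integrable (fun p => W (p.1 - p.2)) (μ₂.prod μ₂) →
          ∀ γ : Measure (EuclideanSpace ℝ (Fin d) × EuclideanSpace ℝ (Fin d)),
            γ.map Prod.fst = μ₁ → γ.map Prod.snd = μ₂ →
            (∀ γ' : Measure (EuclideanSpace ℝ (Fin d) × EuclideanSpace ℝ (Fin d)),
              γ'.map Prod.fst = μ₁ → γ'.map Prod.snd = μ₂ →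
              (∫ p, ‖p.1 - p.2‖ ^ 2 ∂γ) ≤ ∫ p, ‖p.1 - p.2‖ ^ 2 ∂γ') →
            Integrable (fun p => ‖p.1 - p.2‖ ^ 2) γ →
            |((∫ x, V x ∂μ₁) + (1 / 2) * ∫ p, W (p.1 - p.2) ∂(μ₁.prod μ₁))
              - ((∫ x, V x ∂μ₂) + (1 / 2) * ∫ p, W (p.1 - p.2) ∂(μ₂.prod μ₂))|
              ≤ C' * (1 + (∫ x, ‖x‖ ^ 2 ∂μ₁) + ∫ x, ‖x‖ ^ 2 ∂μ₂)
                * Real.sqrt (∫ p, ‖p.1 - p.2‖ ^ 2 ∂γ) := by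
  refine ⟨6 * C, by positivity, ?_⟩
  intro V W V' W' hV hW hVb hWb _hWeven μ₁ μ₂ hμ₁ hμ₂ hm₁ hm₂ hVi₁ hVi₂ hWi₁ hWi₂
    γ hγ₁ hγ₂ _hopt hγT
  exact main_aux C hC V W V' W' hV hW hVb hWb μ₁ μ₂ hμ₁ hμ₂ hm₁ hm₂ hVi₁ hVi₂ hWi₁ hWi₂
    γ hγ₁ hγ₂ hγT
end

section
/- Let (μ_k)_{k≥0} be a sequence in 𝒫₂(ℝ^d) and τ > 0, n ∈ ℕ with nτ ≤ T. Suppose for some q' ∈ (0,1) and constants C > 0: (1/(2τ)) d_W²(μ_k, μ_{k+1}) + φ(μ_{k+1}) ≤ φ(μ_k) + Cτ(1 + m₂(μ_k)^{q'}) for all k, where φ is bounded below and m₂(μ_n) ≤ 2 m₂(μ₀) + 2 d_W²(μ₀, μ_n). Then there is C' (depending on C, T, μ₀, inf φ, φ(μ₀) but not on τ, n) such that m₂(μ_n) ≤ C', Σ_{k=0}^{n−1} d_W²(μ_k, μ_{k+1}) ≤ C'τ, and φ(μ_n) ≤ C'. -/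
set_option maxHeartbeats 4000000

/-- For `0 < q' < 1` and `0 ≤ x`, we have `x ^ q' ≤ 1 + x`. -/
lemma rpow_le_one_add_self {q' x : ℝ} (hq : q' ∈ Set.Ioo (0:ℝ) 1) (hx : 0 ≤ x) :
    x ^ q' ≤ 1 + x := by
  rcases le_or_gt x 1 with h | h
  · have : x ^ q' ≤ 1 := Real.rpow_le_one hx h (le_of_lt hq.1)
    linarith
  · have : x ^ q' ≤ x ^ (1:ℝ) :=
      Real.rpow_le_rpow_of_exponent_le (le_of_lt h) (le_of_lt hq.2)
    rw [Real.rpow_one] at this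
    linarith

theorem jko_uniform_bounds (C T q' M0 P0 B : ℝ) (hC : 0 < C) (hT : 0 < T)
    (hq : q' ∈ Set.Ioo (0 : ℝ) 1) :
    ∃ τ₀ > (0 : ℝ), ∃ C' > (0 : ℝ),
      ∀ (τ : ℝ) (n : ℕ) (m φ D Wd : ℕ → ℝ),
        0 < τ → τ ≤ τ₀ → (n : ℝ) * τ ≤ T →
        (∀ k, 0 ≤ m k) → (∀ k, 0 ≤ D k) → (∀ k, 0 ≤ Wd k) →
        m 0 ≤ M0 → φ 0 ≤ P0 → (∀ k, B ≤ φ k) →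
        (∀ k, k < n →
          (1 / (2 * τ)) * (D k) ^ 2 + φ (k + 1) ≤ φ k + C * τ * (1 + m k ^ q')) →
        (∀ k, k ≤ n → m k ≤ 2 * m 0 + 2 * (Wd k) ^ 2) →
        (∀ k, k ≤ n → Wd k ≤ ∑ j ∈ Finset.range k, D j) →
        m n ≤ C' ∧ (∑ k ∈ Finset.range n, (D k) ^ 2) ≤ C' * τ ∧ φ n ≤ C' := by
  -- abbreviations for the constants
  set M0' : ℝ := max M0 0 with hM0'
  set P0' : ℝ := max (P0 - B) 0 with hP0'
  set A : ℝ := 2 * P0' + 2 * C * T * (2 + 2 * M0') + 1 with hA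
  set E : ℝ := Real.exp (4 * C * T ^ 2) with hE
  have hM0'0 : 0 ≤ M0' := le_max_right _ _
  have hP0'0 : 0 ≤ P0' := le_max_right _ _
  have hA0 : 0 < A := by positivity
  have hE0 : 0 < E := Real.exp_pos _
  set K1 : ℝ := 2 * M0' + 2 * T * A * E with hK1
  set K2 : ℝ := A * E with hK2
  set K3 : ℝ := max P0 0 + C * T * (2 + 2 * M0') + 2 * C * A * E * T ^ 2 with hK3
  have hK10 : 0 ≤ K1 := by positivity
  have hK20 : 0 ≤ K2 := by positivity
  have hK30 : 0 ≤ K3 := by positivity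
  refine ⟨1, one_pos, K1 + K2 + K3 + 1, by positivity, ?_⟩
  intro τ n m φ D Wd hτ hττ₀ hnτ hm0 hD0 hWd0 hmM0 hφP0 hφB hstep hmW hWD
  set S : ℕ → ℝ := fun k => ∑ j ∈ Finset.range k, (D j) ^ 2 with hS
  have hS0 : ∀ k, 0 ≤ S k := fun k => Finset.sum_nonneg fun j _ => sq_nonneg _
  have hSmono : ∀ j k, j ≤ k → S j ≤ S k := by
    intro j k hjk
    exact Finset.sum_le_sum_of_subset_of_nonneg (Finset.range_subset_range.2 hjk)
      (fun i _ _ => sq_nonneg _)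
  have hnτ0 : 0 ≤ (n : ℝ) * τ := by positivity
  -- telescoping
  have Tel : ∀ k, k ≤ n →
      (1 / (2 * τ)) * S k + φ k ≤ φ 0 + C * τ * ∑ j ∈ Finset.range k, (1 + m j ^ q') := by
    intro k hk
    induction k with
    | zero => simp [hS]
    | succ k ih =>
      have hk' : k ≤ n := Nat.le_of_succ_le hk
      have h1 := ih hk'
      have h2 := hstep k (Nat.lt_of_succ_le hk)
      have hSsucc : S (k + 1) = S k + (D k) ^ 2 := Finset.sum_range_succ _ _
      rw [hSsucc, Finset.sum_range_succ, mul_add, mul_add]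
      linarith
  -- bound on `1 + m j ^ q'`
  have hmb : ∀ j, j ≤ n → 1 + m j ^ q' ≤ 2 + 2 * M0' + 2 * j * S j := by
    intro j hj
    have h1 : m j ^ q' ≤ 1 + m j := rpow_le_one_add_self hq (hm0 j)
    have h2 : m j ≤ 2 * m 0 + 2 * (Wd j) ^ 2 := hmW j hj
    have h3 : (Wd j) ^ 2 ≤ (∑ i ∈ Finset.range j, D i) ^ 2 := by
      apply pow_le_pow_left₀ (hWd0 j) (hWD j hj)
    have h4 : (∑ i ∈ Finset.range j, D i) ^ 2 ≤ j * S j := by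
      have := sq_sum_le_card_mul_sum_sq (s := Finset.range j) (f := D)
      simpa [hS] using this
    have h5 : m 0 ≤ M0' := le_trans hmM0 (le_max_left _ _)
    linarith
  -- recurrence for S
  have hrec : ∀ k, k ≤ n →
      S k ≤ A * τ + (4 * C * n * τ ^ 2) * ∑ j ∈ Finset.range k, S j := by
    intro k hk
    have h1 := Tel k hk
    have hφk := hφB k
    have h2 : (1 / (2 * τ)) * S k ≤ P0' + C * τ * ∑ j ∈ Finset.range k, (1 + m j ^ q') := by
      have : φ 0 - φ k ≤ P0' := by
        have := le_max_left (P0 - B) 0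
        linarith
      linarith
    have h3 : S k ≤ 2 * τ * P0' + 2 * C * τ ^ 2 * ∑ j ∈ Finset.range k, (1 + m j ^ q') := by
      have h2' := mul_le_mul_of_nonneg_left h2 (le_of_lt (mul_pos two_pos hτ))
      have heq : 2 * τ * (1 / (2 * τ) * S k) = S k := by
        field_simp
      rw [heq] at h2'
      calc S k ≤ (2 * τ) * (P0' + C * τ * ∑ j ∈ Finset.range k, (1 + m j ^ q')) := h2'
        _ = 2 * τ * P0' + 2 * C * τ ^ 2 * ∑ j ∈ Finset.range k, (1 + m j ^ q') := by ring
    have h4 : ∑ j ∈ Finset.range k, (1 + m j ^ q')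
        ≤ ∑ j ∈ Finset.range k, (2 + 2 * M0' + 2 * j * S j) := by
      apply Finset.sum_le_sum
      intro j hjmem
      exact hmb j (le_trans (le_of_lt (Finset.mem_range.1 hjmem)) hk)
    have h5 : ∑ j ∈ Finset.range k, (2 + 2 * M0' + 2 * (j : ℝ) * S j)
        = k * (2 + 2 * M0') + ∑ j ∈ Finset.range k, 2 * (j : ℝ) * S j := by
      rw [Finset.sum_add_distrib, Finset.sum_const, Finset.card_range, nsmul_eq_mul]
    have h6 : ∑ j ∈ Finset.range k, 2 * (j : ℝ) * S j
        ≤ ∑ j ∈ Finset.range k, 2 * (n : ℝ) * S j := by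
      apply Finset.sum_le_sum
      intro j hjmem
      have hjn : (j : ℝ) ≤ (n : ℝ) := by
        exact_mod_cast le_trans (le_of_lt (Finset.mem_range.1 hjmem)) hk
      have hn0 := mul_nonneg (sub_nonneg.2 hjn) (hS0 j)
      nlinarith [hn0]
    have hkτ : (k : ℝ) * τ ≤ T := by
      have hkn : (k : ℝ) ≤ (n : ℝ) := by exact_mod_cast hk
      nlinarith
    have hsumS : 0 ≤ ∑ j ∈ Finset.range k, S j :=
      Finset.sum_nonneg fun j _ => hS0 j
    have hsum2 : (0:ℝ) ≤ ∑ j ∈ Finset.range k, (1 + m j ^ q') := by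
      apply Finset.sum_nonneg
      intro j _
      have : (0:ℝ) ≤ m j ^ q' := Real.rpow_nonneg (hm0 j) q'
      linarith
    -- assemble
    have hCτ2 : (0:ℝ) ≤ 2 * C * τ ^ 2 := by positivity
    have h7 : 2 * C * τ ^ 2 * ∑ j ∈ Finset.range k, (1 + m j ^ q')
        ≤ 2 * C * τ ^ 2 * ((k : ℝ) * (2 + 2 * M0')) +
          (4 * C * n * τ ^ 2) * ∑ j ∈ Finset.range k, S j := by
      have hmid : ∑ j ∈ Finset.range k, (1 + m j ^ q')
          ≤ (k : ℝ) * (2 + 2 * M0') + ∑ j ∈ Finset.range k, 2 * (n : ℝ) * S j := by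
        calc ∑ j ∈ Finset.range k, (1 + m j ^ q')
            ≤ ∑ j ∈ Finset.range k, (2 + 2 * M0' + 2 * (j : ℝ) * S j) := h4
          _ = (k : ℝ) * (2 + 2 * M0') + ∑ j ∈ Finset.range k, 2 * (j : ℝ) * S j := h5
          _ ≤ (k : ℝ) * (2 + 2 * M0') + ∑ j ∈ Finset.range k, 2 * (n : ℝ) * S j := by
              linarith [h6]
      calc 2 * C * τ ^ 2 * ∑ j ∈ Finset.range k, (1 + m j ^ q')
          ≤ 2 * C * τ ^ 2 * ((k : ℝ) * (2 + 2 * M0') +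
              ∑ j ∈ Finset.range k, 2 * (n : ℝ) * S j) :=
            mul_le_mul_of_nonneg_left hmid hCτ2
        _ = 2 * C * τ ^ 2 * ((k : ℝ) * (2 + 2 * M0')) +
              (4 * C * n * τ ^ 2) * ∑ j ∈ Finset.range k, S j := by
            rw [← Finset.mul_sum]; ring
    have h8 : 2 * C * τ ^ 2 * ((k : ℝ) * (2 + 2 * M0')) ≤ 2 * C * T * (2 + 2 * M0') * τ := by
      have hc0 : (0:ℝ) ≤ 2 * C * τ * (2 + 2 * M0') := by positivity
      calc 2 * C * τ ^ 2 * ((k : ℝ) * (2 + 2 * M0'))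
          = 2 * C * τ * (2 + 2 * M0') * ((k : ℝ) * τ) := by ring
        _ ≤ 2 * C * τ * (2 + 2 * M0') * T := mul_le_mul_of_nonneg_left hkτ hc0
        _ = 2 * C * T * (2 + 2 * M0') * τ := by ring
    have h9 : 2 * τ * P0' ≤ 2 * P0' * τ := le_of_eq (by ring)
    have hAτ : 2 * τ * P0' + 2 * C * T * (2 + 2 * M0') * τ ≤ A * τ := by
      rw [hA]; nlinarith [hτ]
    linarith
  -- discrete Gronwall
  set b : ℝ := 4 * C * n * τ ^ 2 with hb
  have hb0 : 0 ≤ b := by positivity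
  have G : ∀ k, k ≤ n → S k ≤ A * τ * (1 + b) ^ k := by
    intro k
    induction k using Nat.strong_induction_on with
    | _ k ih =>
      intro hk
      have h1 := hrec k hk
      have h2 : ∑ j ∈ Finset.range k, S j ≤ ∑ j ∈ Finset.range k, A * τ * (1 + b) ^ j := by
        apply Finset.sum_le_sum
        intro j hjmem
        exact ih j (Finset.mem_range.1 hjmem)
          (le_trans (le_of_lt (Finset.mem_range.1 hjmem)) hk)
      have h3 : b * ∑ j ∈ Finset.range k, A * τ * (1 + b) ^ j
          = A * τ * ((1 + b) ^ k - 1) := by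
        have hg := geom_sum_mul (1 + b) k
        have : (1 + b - 1) = b := by ring
        rw [this] at hg
        rw [← Finset.mul_sum, ← mul_assoc]
        calc b * (A * τ) * ∑ j ∈ Finset.range k, (1 + b) ^ j
            = A * τ * ((∑ j ∈ Finset.range k, (1 + b) ^ j) * b) := by ring
          _ = A * τ * ((1 + b) ^ k - 1) := by rw [hg]
      have h4 : b * ∑ j ∈ Finset.range k, S j
          ≤ A * τ * ((1 + b) ^ k - 1) := by
        rw [← h3]
        exact mul_le_mul_of_nonneg_left h2 hb0
      calc S k ≤ A * τ + b * ∑ j ∈ Finset.range k, S j := h1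
        _ ≤ A * τ + A * τ * ((1 + b) ^ k - 1) := by linarith
        _ = A * τ * (1 + b) ^ k := by ring
  -- exponential bound
  have hexp : (1 + b) ^ n ≤ E := by
    have h1 : (1 + b : ℝ) ≤ Real.exp b := by
      have := Real.add_one_le_exp b
      linarith
    have h2 : (1 + b) ^ n ≤ (Real.exp b) ^ n :=
      pow_le_pow_left₀ (by linarith) h1 n
    have h3 : (Real.exp b) ^ n = Real.exp (b * n) := by
      rw [← Real.exp_nat_mul]; ring_nf
    have h4 : b * n ≤ 4 * C * T ^ 2 := by
      have hsq : ((n:ℝ) * τ) ^ 2 ≤ T ^ 2 := by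
        have := mul_self_le_mul_self hnτ0 hnτ
        nlinarith [this]
      calc b * n = 4 * C * ((n:ℝ) * τ) ^ 2 := by rw [hb]; ring
        _ ≤ 4 * C * T ^ 2 :=
          mul_le_mul_of_nonneg_left hsq (by positivity)
    rw [hE]
    calc (1 + b) ^ n ≤ Real.exp (b * n) := by rw [← h3]; exact h2
      _ ≤ Real.exp (4 * C * T ^ 2) := Real.exp_le_exp.2 h4
  have hSbd : ∀ k, k ≤ n → S k ≤ A * τ * E := by
    intro k hk
    have h1 := G k hk
    have h2 : (1 + b) ^ k ≤ (1 + b) ^ n := pow_le_pow_right₀ (by linarith) hk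
    have : A * τ * (1 + b) ^ k ≤ A * τ * E :=
      mul_le_mul_of_nonneg_left (le_trans h2 hexp) (by positivity)
    linarith
  have hSn := hSbd n le_rfl
  -- first bound: m n
  have hmn : m n ≤ K1 := by
    have h1 : m n ≤ 2 * m 0 + 2 * (Wd n) ^ 2 := hmW n le_rfl
    have h3 : (Wd n) ^ 2 ≤ (∑ i ∈ Finset.range n, D i) ^ 2 :=
      pow_le_pow_left₀ (hWd0 n) (hWD n le_rfl) 2
    have h4 : (∑ i ∈ Finset.range n, D i) ^ 2 ≤ n * S n := by
      have := sq_sum_le_card_mul_sum_sq (s := Finset.range n) (f := D)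
      simpa [hS] using this
    have h5 : (n:ℝ) * S n ≤ (n:ℝ) * (A * τ * E) :=
      mul_le_mul_of_nonneg_left hSn (Nat.cast_nonneg n)
    have h6 : (n:ℝ) * (A * τ * E) ≤ T * A * E := by
      have : (n:ℝ) * (A * τ * E) = ((n:ℝ) * τ) * (A * E) := by ring
      rw [this]
      have hAE : (0:ℝ) ≤ A * E := by positivity
      nlinarith [hnτ]
    have h7 : m 0 ≤ M0' := le_trans hmM0 (le_max_left _ _)
    rw [hK1]; linarith
  -- second bound: sum of D^2
  have hsumD : S n ≤ K2 * τ := by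
    rw [hK2]
    calc S n ≤ A * τ * E := hSn
      _ = A * E * τ := by ring
  -- third bound: φ n
  have hφn : φ n ≤ K3 := by
    have h1 := Tel n le_rfl
    have h2 : (0:ℝ) ≤ (1 / (2 * τ)) * S n := by positivity
    have h4 : ∑ j ∈ Finset.range n, (1 + m j ^ q')
        ≤ ∑ j ∈ Finset.range n, (2 + 2 * M0' + 2 * (n:ℝ) * S j) := by
      apply Finset.sum_le_sum
      intro j hjmem
      have hjn : j ≤ n := le_of_lt (Finset.mem_range.1 hjmem)
      have hjcast : (j : ℝ) ≤ (n : ℝ) := by exact_mod_cast hjn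
      have hn0 := mul_nonneg (sub_nonneg.2 hjcast) (hS0 j)
      nlinarith [hmb j hjn, hn0]
    have h5 : ∑ j ∈ Finset.range n, (2 + 2 * M0' + 2 * (n:ℝ) * S j)
        ≤ (n:ℝ) * (2 + 2 * M0') + 2 * (n:ℝ) * ((n:ℝ) * (A * τ * E)) := by
      rw [Finset.sum_add_distrib, Finset.sum_const, Finset.card_range, nsmul_eq_mul,
        ← Finset.mul_sum]
      have hsum : ∑ j ∈ Finset.range n, S j ≤ (n:ℝ) * (A * τ * E) := by
        calc ∑ j ∈ Finset.range n, S j ≤ ∑ j ∈ Finset.range n, A * τ * E :=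
              Finset.sum_le_sum fun j hj =>
                hSbd j (le_of_lt (Finset.mem_range.1 hj))
          _ = (n:ℝ) * (A * τ * E) := by
              rw [Finset.sum_const, Finset.card_range]; ring
      have h2n : (0:ℝ) ≤ 2 * (n:ℝ) := by positivity
      have := mul_le_mul_of_nonneg_left hsum h2n
      linarith
    have h6 : C * τ * ∑ j ∈ Finset.range n, (1 + m j ^ q')
        ≤ C * τ * ((n:ℝ) * (2 + 2 * M0') + 2 * (n:ℝ) * ((n:ℝ) * (A * τ * E))) := by
      apply mul_le_mul_of_nonneg_left (le_trans h4 h5) (by positivity)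
    have h7 : C * τ * ((n:ℝ) * (2 + 2 * M0') + 2 * (n:ℝ) * ((n:ℝ) * (A * τ * E)))
        = C * ((n:ℝ) * τ) * (2 + 2 * M0') + 2 * C * A * E * ((n:ℝ) * τ) ^ 2 := by ring
    have h8 : C * ((n:ℝ) * τ) * (2 + 2 * M0') ≤ C * T * (2 + 2 * M0') := by
      have hc0 : (0:ℝ) ≤ C * (2 + 2 * M0') := by positivity
      calc C * ((n:ℝ) * τ) * (2 + 2 * M0') = C * (2 + 2 * M0') * ((n:ℝ) * τ) := by ring
        _ ≤ C * (2 + 2 * M0') * T := mul_le_mul_of_nonneg_left hnτ hc0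
        _ = C * T * (2 + 2 * M0') := by ring
    have h9 : 2 * C * A * E * ((n:ℝ) * τ) ^ 2 ≤ 2 * C * A * E * T ^ 2 := by
      have hsq : ((n:ℝ) * τ) ^ 2 ≤ T ^ 2 := by
        have := mul_self_le_mul_self hnτ0 hnτ
        nlinarith [this]
      have hc0 : (0:ℝ) ≤ 2 * C * A * E := by positivity
      exact mul_le_mul_of_nonneg_left hsq hc0
    have hφ0 : φ 0 ≤ max P0 0 := le_trans hφP0 (le_max_left _ _)
    rw [hK3]
    rw [h7] at h6
    linarith
  refine ⟨?_, ?_, ?_⟩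
  · linarith
  · have hle : K2 ≤ K1 + K2 + K3 + 1 := by linarith
    have : K2 * τ ≤ (K1 + K2 + K3 + 1) * τ :=
      mul_le_mul_of_nonneg_right hle (le_of_lt hτ)
    linarith
  · linarith
end
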